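/- arXiv:1507.04166 — 3 statements merged into one kernel-verified Lean document; each statement's English description precedes it below -/
import Mathlib

section
/- Let S be a local ring with maximal ideal m, let k be a field mapping to S, and ℓ a field extension of k. Suppose S ⊗_k ℓ and an S-module R are both flat over S, and there is an injective S-module map S ⊗_k ℓ → R. Then the induced map (S/m) ⊗_k ℓ → (S/m) ⊗_S R is injective, provided every element of m is nilpotent. -/
open TensorProduct

lemma aux_one_tmul_eq_zero_iff {S : Type*} [CommRing S] (m : Ideal S)
    {N : Type*} [AddCommGroup N] [Module S N] (y : N) :
    (1 : S ⧸ m) ⊗ₜ[S] y = 0 ↔ y ∈ m • (⊤ : Submodule S N) := by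
  constructor
  · intro h
    have h2 := congrArg (TensorProduct.quotTensorEquivQuotSMul N m) h
    rw [map_zero, show (1 : S ⧸ m) = Ideal.Quotient.mk m 1 from rfl,
      TensorProduct.quotTensorEquivQuotSMul_mk_tmul, one_smul] at h2
    exact (Submodule.Quotient.mk_eq_zero _).mp h2
  · intro h
    apply (TensorProduct.quotTensorEquivQuotSMul N m).injective
    rw [map_zero, show (1 : S ⧸ m) = Ideal.Quotient.mk m 1 from rfl,
      TensorProduct.quotTensorEquivQuotSMul_mk_tmul, one_smul]
    exact (Submodule.Quotient.mk_eq_zero _).mpr h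

/-- Let `S` be a local ring with maximal ideal `m` all of whose elements are
nilpotent, `k` a field mapping to `S`, and `ℓ` a field extension of `k`. If `S ⊗[k] ℓ` and an
`S`-module `R` are flat over `S` and there is an injective `S`-linear map `S ⊗[k] ℓ → R`, then
the induced map `(S/m) ⊗[S] (S ⊗[k] ℓ) → (S/m) ⊗[S] R`, i.e. `(S/m) ⊗[k] ℓ → (S/m) ⊗[S] R`,
is injective. -/
theorem pv_reduction_mod_max_ideal
    (k : Type*) [Field k] (S : Type*) [CommRing S] [IsLocalRing S] [Algebra k S]
    (ℓ : Type*) [Field ℓ] [Algebra k ℓ]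
    (R : Type*) [AddCommGroup R] [Module S R]
    [Module.Flat S (S ⊗[k] ℓ)] [Module.Flat S R]
    (f : (S ⊗[k] ℓ) →ₗ[S] R) (hf : Function.Injective f)
    (hnil : ∀ x ∈ IsLocalRing.maximalIdeal S, IsNilpotent x) :
    Function.Injective
      (LinearMap.lTensor (S ⧸ IsLocalRing.maximalIdeal S) f) := by
  set m := IsLocalRing.maximalIdeal S with hm
  -- it suffices to show the kernel is trivial
  suffices h0 : ∀ t, LinearMap.lTensor (S ⧸ m) f t = 0 → t = 0 by
    intro a c hac
    rw [← sub_eq_zero]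
    exact h0 _ (by rw [map_sub, hac, sub_self])
  -- every element of `(S⧸m) ⊗[S] M` is of the form `1 ⊗ x`
  have hsurj : ∀ t : (S ⧸ m) ⊗[S] (S ⊗[k] ℓ),
      ∃ x : S ⊗[k] ℓ, (1 : S ⧸ m) ⊗ₜ[S] x = t := by
    intro t
    induction t using TensorProduct.induction_on with
    | zero => exact ⟨0, by simp⟩
    | tmul s x =>
      obtain ⟨s, rfl⟩ := Ideal.Quotient.mk_surjective s
      refine ⟨s • x, ?_⟩
      rw [tmul_smul, smul_tmul']
      congr 1
      rw [← Algebra.algebraMap_eq_smul_one]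
      rfl
    | add a c ha hc =>
      obtain ⟨xa, rfl⟩ := ha
      obtain ⟨xc, rfl⟩ := hc
      exact ⟨xa + xc, by rw [tmul_add]⟩
  intro t ht
  by_contra htne
  obtain ⟨x, rfl⟩ := hsurj t
  rw [LinearMap.lTensor_tmul] at ht
  -- hence `f x ∈ m • R`
  have hfx : f x ∈ m • (⊤ : Submodule S R) := (aux_one_tmul_eq_zero_iff m (f x)).mp ht
  have hx : x ∉ m • (⊤ : Submodule S (S ⊗[k] ℓ)) :=
    fun h => htne ((aux_one_tmul_eq_zero_iff m x).mpr h)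
  -- `S ⊗[k] ℓ` is free over `S`; some coordinate of `x` is a unit
  let B : Module.Basis _ S (S ⊗[k] ℓ) := Algebra.TensorProduct.basis S (Module.Basis.ofVectorSpace k ℓ)
  have hcoord : ∃ i, B.repr x i ∉ m := by
    by_contra hc
    push_neg at hc
    apply hx
    have hxe : x = Finsupp.sum (B.repr x) fun i c => c • B i := (B.linearCombination_repr x).symm
    rw [hxe]
    exact Submodule.sum_mem _ fun i _ => Submodule.smul_mem_smul (hc i) trivial
  obtain ⟨i0, hi0⟩ := hcoord
  have hu : IsUnit (B.repr x i0) := by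
    by_contra hnu
    exact hi0 (IsLocalRing.mem_maximalIdeal _ |>.mpr hnu)
  obtain ⟨u, hus⟩ := hu
  -- capture `f x ∈ m • R` by a finitely generated subideal `I ≤ m`
  obtain ⟨I, hIfg, hIm, hfxI⟩ :
      ∃ I : Ideal S, I.FG ∧ I ≤ m ∧ f x ∈ I • (⊤ : Submodule S R) := by
    refine Submodule.smul_induction_on hfx ?_ ?_
    · intro a ha r _
      exact ⟨Ideal.span {a}, ⟨{a}, by simp⟩,
        by rwa [Ideal.span_le, Set.singleton_subset_iff],
        Submodule.smul_mem_smul (Ideal.subset_span rfl) trivial⟩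
    · rintro y z ⟨I1, h1f, h1m, h1⟩ ⟨I2, h2f, h2m, h2⟩
      exact ⟨I1 ⊔ I2, Submodule.FG.sup h1f h2f, sup_le h1m h2m,
        Submodule.add_mem _ (Submodule.smul_mono_left le_sup_left h1)
          (Submodule.smul_mono_left le_sup_right h2)⟩
  -- `I` is nilpotent
  have hrad : I ≤ Ideal.radical ⊥ := by
    intro a ha
    obtain ⟨n, hn⟩ := hnil a (hIm ha)
    exact ⟨n, by simp [hn]⟩
  obtain ⟨n, hn⟩ := Ideal.exists_pow_le_of_le_radical_of_fg hrad hIfg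
  have hnbot : I ^ n = ⊥ := le_bot_iff.mp hn
  -- descending induction kills all powers of `I`, down to `I ^ 0 = ⊤`
  have key : ∀ j, I ^ (j + 1) = ⊥ → I ^ j = ⊥ := by
    intro j hj
    rw [eq_bot_iff]
    intro a ha
    rw [Ideal.mem_bot]
    have h1 : a • f x ∈ (I ^ (j + 1)) • (⊤ : Submodule S R) := by
      rw [pow_succ, ← smul_eq_mul, Submodule.smul_assoc]
      exact Submodule.smul_mem_smul ha hfxI
    rw [hj, Submodule.bot_smul, Submodule.mem_bot] at h1
    have h3 : a • x = 0 := by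
      apply hf
      rw [map_smul, h1, map_zero]
    have h4 : a * B.repr x i0 = 0 := by
      have h5 := congrArg (fun y => B.repr y i0) h3
      simpa [smul_eq_mul] using h5
    rw [← hus] at h4
    have h6 := congrArg (· * ((u⁻¹ : Sˣ) : S)) h4
    simpa [mul_assoc] using h6
  have hzero : ∀ N : ℕ, I ^ N = ⊥ → (⊤ : Ideal S) = ⊥ := by
    intro N
    induction N with
    | zero => intro h; rw [pow_zero, Ideal.one_eq_top] at h; exact h
    | succ n ih => intro h; exact ih (key n h)
  have htop := hzero n hnbot
  have h1 : (1 : S) = 0 := by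
    have hmem : (1 : S) ∈ (⊥ : Ideal S) := htop ▸ Submodule.mem_top
    exact (Ideal.mem_bot).mp hmem
  exact one_ne_zero h1
end

section
/- Let k be a field, S a k-algebra that is a field, and R a finitely generated S-algebra. If ℓ is a field extension of k such that S ⊗_k ℓ embeds into R as an S-algebra, then ℓ is algebraic over k. -/
open TensorProduct
open Polynomial

lemma aux_infinite_monic_irred (k : Type*) [Field k] :
    {p : k[X] | p.Monic ∧ Irreducible p}.Infinite := by
  intro hfin
  set t := hfin.toFinset with ht
  set P := (∏ p ∈ t, p) * X with hP
  have hmon : ∀ p ∈ t, p.Monic := fun p hp => (hfin.mem_toFinset.mp hp).1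
  have hprod : (∏ p ∈ t, p).Monic := monic_prod_of_monic _ _ hmon
  have hPm : P.Monic := hprod.mul monic_X
  have hdeg : (1 : k[X]).degree < P.degree := by
    rw [degree_one, hP, degree_mul, degree_X]
    have h0 : 0 ≤ (∏ p ∈ t, p).degree := zero_le_degree_iff.mpr hprod.ne_zero
    calc (0 : WithBot ℕ) < 0 + 1 := by norm_num
    _ ≤ (∏ p ∈ t, p).degree + 1 := by exact add_le_add_left h0 1
  have hgm : (P + 1).Monic := hPm.add_of_left hdeg
  have hgd : (P + 1).degree = P.degree := degree_add_eq_left_of_degree_lt hdeg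
  have hnu : ¬ IsUnit (P + 1) := by
    apply not_isUnit_of_natDegree_pos
    rw [natDegree_pos_iff_degree_pos, hgd]
    simpa using hdeg
  obtain ⟨r, hrm, hri, hrd⟩ := exists_monic_irreducible_factor _ hnu
  have hrt : r ∈ t := hfin.mem_toFinset.mpr ⟨hrm, hri⟩
  have h1 : r ∣ P := Dvd.dvd.mul_right (Finset.dvd_prod_of_mem _ hrt) X
  have : r ∣ 1 := (dvd_add_right h1).mp (by simpa using hrd)
  exact hri.not_isUnit (isUnit_of_dvd_one this)

set_option synthInstance.maxHeartbeats 1000000 in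
lemma aux_jacobson_field (K : Type*) [Field K] : IsJacobsonRing K := inferInstance

set_option maxHeartbeats 2000000 in
set_option synthInstance.maxHeartbeats 1000000 in
lemma aux_core (k : Type*) [Field k] (S : Type*) [Field S] [Algebra k S]
    (R : Type*) [CommRing R] [Algebra S R] (hfg : Algebra.FiniteType S R)
    (x : R) (hinj : Function.Injective (Polynomial.aeval x : S[X] →ₐ[S] R))
    (hu : ∀ p : k[X], p ≠ 0 → IsUnit (Polynomial.aeval x (p.map (algebraMap k S)))) :
    False := by
  classical
  set φ : S[X] →ₐ[S] R := Polynomial.aeval x with hφ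
  set W : Submonoid R := Submonoid.map (φ : S[X] →* R) (nonZeroDivisors S[X]) with hW
  have hmemW : ∀ p : S[X], p ≠ 0 → φ p ∈ W := fun p hp =>
    Submonoid.mem_map_of_mem _ (mem_nonZeroDivisors_of_ne_zero hp)
  have hW0 : (0 : R) ∉ W := by
    rintro ⟨p, hp, hp0⟩
    have hp' : p = 0 := hinj (by simpa using hp0)
    rw [hp'] at hp
    exact zero_notMem_nonZeroDivisors hp
  -- the localization B of R at W
  set B := Localization W with hB
  haveI : Nontrivial B := by
    refine nontrivial_of_ne 1 0 (fun h10 => ?_)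
    have : algebraMap R B 1 = 0 := by simpa using h10
    obtain ⟨m, hm⟩ := (IsLocalization.map_eq_zero_iff W B 1).mp this
    rw [mul_one] at hm
    exact hW0 (hm ▸ m.2)
  -- K = Frac S[X] maps into B
  set K := FractionRing S[X] with hK
  have hle : nonZeroDivisors S[X] ≤ W.comap (φ : S[X] →+* R).toMonoidHom := by
    intro p hp
    exact Submonoid.mem_map_of_mem _ hp
  set ρ : K →+* B := IsLocalization.map (M := nonZeroDivisors S[X]) (T := W) B
    (φ : S[X] →+* R) hle with hρ
  letI : Algebra K B := ρ.toAlgebra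
  have hcomp : ∀ p : S[X], algebraMap R B (φ p) = ρ (algebraMap S[X] K p) := by
    intro p
    exact (RingHom.congr_fun (IsLocalization.map_comp (M := nonZeroDivisors S[X]) hle) p).symm
  -- B is finite type over K
  obtain ⟨G, hG⟩ := hfg.out
  have hadj : ∀ r : R, algebraMap R B r ∈
      Algebra.adjoin K ((G.image (algebraMap R B) : Finset B) : Set B) := by
    intro r
    have hr : r ∈ Algebra.adjoin S (G : Set R) := hG.symm ▸ Algebra.mem_top
    induction hr using Algebra.adjoin_induction with
    | mem g hg => exact Algebra.subset_adjoin (by simpa using Finset.mem_image_of_mem _ hg)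
    | algebraMap c =>
        have : algebraMap S R c = φ (C c) := by simp [hφ]
        rw [this, hcomp]
        exact Subalgebra.algebraMap_mem _ _
    | add r₁ r₂ h₁ h₂ ih₁ ih₂ => rw [map_add]; exact add_mem ih₁ ih₂
    | mul r₁ r₂ h₁ h₂ ih₁ ih₂ => rw [map_mul]; exact mul_mem ih₁ ih₂
  haveI hftKB : Algebra.FiniteType K B := by
    refine ⟨⟨G.image (algebraMap R B), ?_⟩⟩
    rw [eq_top_iff]
    rintro b -
    obtain ⟨⟨r, w⟩, hb⟩ := IsLocalization.mk'_surjective W b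
    dsimp only at hb
    obtain ⟨p, hp, hpw⟩ := w.2
    have hunit : IsUnit (algebraMap R B (φ p)) :=
      IsLocalization.map_units B ⟨φ p, hpw ▸ w.2⟩
    have hbeq : b = algebraMap R B r * ρ (IsLocalization.mk' K 1 ⟨p, hp⟩) := by
      apply hunit.mul_left_cancel
      rw [mul_comm (algebraMap R B (φ p)) b]
      have h1 : b * algebraMap R B (φ p) = algebraMap R B r := by
        rw [← hb, show φ p = ↑w from hpw]
        exact IsLocalization.mk'_spec B r w
      rw [h1, hcomp]
      have h2 : ρ (algebraMap S[X] K p) * (algebraMap R B r * ρ (IsLocalization.mk' K 1 ⟨p, hp⟩))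
          = algebraMap R B r * ρ (algebraMap S[X] K p * IsLocalization.mk' K 1 ⟨p, hp⟩) := by
        rw [map_mul]; ring
      rw [h2, IsLocalization.mk'_spec' K 1 ⟨p, hp⟩]
      simp
    rw [hbeq]
    exact mul_mem (hadj r) (Subalgebra.algebraMap_mem _ _)
  -- quotient by a maximal ideal: a field L, finite over K by Zariski's lemma
  obtain ⟨n, hn⟩ := Ideal.exists_maximal B
  haveI := hn
  set L := B ⧸ n with hL
  letI : Field L := Ideal.Quotient.field n
  haveI hftKL : Algebra.FiniteType K L :=
    hftKB.of_surjective (Ideal.Quotient.mkₐ K n) (Ideal.Quotient.mkₐ_surjective K n)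
  haveI : IsJacobsonRing K := aux_jacobson_field K
  haveI : Module.Finite K L := finite_of_finite_type_of_isJacobsonRing K L
  letI : Algebra S[X] L := ((algebraMap K L).comp (algebraMap S[X] K)).toAlgebra
  haveI : IsScalarTower S[X] K L := IsScalarTower.of_algebraMap_eq fun a => rfl
  set ψ : R →+* L := (Ideal.Quotient.mk n).comp (algebraMap R B) with hψ
  have hψφ : ∀ p : S[X], ψ (φ p) = algebraMap S[X] L p := by
    intro p
    show (Ideal.Quotient.mk n) (algebraMap R B (φ p)) = _
    rw [hcomp]
    rfl
  -- every element of L is algebraic over S[X]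
  have halg : ∀ z : L, IsAlgebraic S[X] z := by
    intro z
    have h1 : IsIntegral K z := IsIntegral.of_finite K z
    exact (IsFractionRing.isAlgebraic_iff S[X] K L).mpr h1.isAlgebraic
  have hALinj : Function.Injective (algebraMap S[X] L) := by
    rw [IsScalarTower.algebraMap_eq S[X] K L]
    exact (algebraMap K L).injective.comp (IsFractionRing.injective S[X] K)
  -- clearing a denominator for each element of L
  have hmul : ∀ z : L, ∃ d : S[X], d ≠ 0 ∧ IsIntegral S[X] (algebraMap S[X] L d * z) := by
    intro z
    obtain ⟨c, hc0, hcz⟩ := halg z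
    refine ⟨c.leadingCoeff, leadingCoeff_ne_zero.mpr hc0,
      integralNormalization c, monic_integralNormalization hc0, ?_⟩
    have h := integralNormalization_aeval_eq_zero hcz
      (fun y hy => hALinj (by simpa using hy))
    rwa [aeval_def] at h
  choose d hd0 hdint using hmul
  set s : S[X] := ∏ g ∈ G, d (ψ g) with hs
  have hs0 : s ≠ 0 := Finset.prod_ne_zero_iff.mpr fun g _ => hd0 _
  have hsint : ∀ j : ℕ, IsIntegral S[X] ((algebraMap S[X] L s) ^ j) := fun j => by
    rw [← map_pow]; exact isIntegral_algebraMap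
  -- main bound: every ψ r becomes integral after multiplying by a power of s
  have main : ∀ r : R, ∃ m : ℕ, IsIntegral S[X] ((algebraMap S[X] L s) ^ m * ψ r) := by
    intro r
    have hr : r ∈ Algebra.adjoin S (G : Set R) := hG.symm ▸ Algebra.mem_top
    induction hr using Algebra.adjoin_induction with
    | mem g hg =>
        refine ⟨1, ?_⟩
        have heq : (algebraMap S[X] L s) ^ 1 * ψ g
            = algebraMap S[X] L (∏ h ∈ G.erase g, d (ψ h))
              * (algebraMap S[X] L (d (ψ g)) * ψ g) := by
          rw [pow_one, hs, ← Finset.mul_prod_erase _ _ hg, map_mul]; ring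
        rw [heq]
        exact isIntegral_algebraMap.mul (hdint (ψ g))
    | algebraMap c =>
        refine ⟨0, ?_⟩
        rw [pow_zero, one_mul]
        have heq : ψ (algebraMap S R c) = algebraMap S[X] L (C c) := by
          rw [show algebraMap S R c = φ (C c) by simp [hφ], hψφ]
        rw [heq]
        exact isIntegral_algebraMap
    | add r₁ r₂ h₁ h₂ ih₁ ih₂ =>
        obtain ⟨m₁, hi₁⟩ := ih₁; obtain ⟨m₂, hi₂⟩ := ih₂
        refine ⟨m₁ + m₂, ?_⟩
        have heq : (algebraMap S[X] L s) ^ (m₁ + m₂) * ψ (r₁ + r₂)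
            = (algebraMap S[X] L s) ^ m₂ * ((algebraMap S[X] L s) ^ m₁ * ψ r₁)
              + (algebraMap S[X] L s) ^ m₁ * ((algebraMap S[X] L s) ^ m₂ * ψ r₂) := by
          rw [map_add, pow_add]; ring
        rw [heq]
        exact ((hsint m₂).mul hi₁).add ((hsint m₁).mul hi₂)
    | mul r₁ r₂ h₁ h₂ ih₁ ih₂ =>
        obtain ⟨m₁, hi₁⟩ := ih₁; obtain ⟨m₂, hi₂⟩ := ih₂
        refine ⟨m₁ + m₂, ?_⟩
        have heq : (algebraMap S[X] L s) ^ (m₁ + m₂) * ψ (r₁ * r₂)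
            = ((algebraMap S[X] L s) ^ m₁ * ψ r₁) * ((algebraMap S[X] L s) ^ m₂ * ψ r₂) := by
          rw [map_mul, pow_add]; ring
        rw [heq]
        exact hi₁.mul hi₂
  -- divisibility: every nonzero k-polynomial divides a power of s (after mapping to S[X])
  have hdvd : ∀ p : k[X], p ≠ 0 → ∃ m : ℕ, p.map (algebraMap k S) ∣ s ^ m := by
    intro p hp
    set pS := p.map (algebraMap k S) with hpSdef
    have hpS0 : pS ≠ 0 := Polynomial.map_ne_zero hp
    obtain ⟨v, hv⟩ := isUnit_iff_exists_inv.mp (hu p hp)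
    obtain ⟨m, hm⟩ := main v
    set pK : K := algebraMap S[X] K pS with hpKdef
    have hpK0 : pK ≠ 0 := by simpa [hpKdef] using hpS0
    have hψv : ψ v = algebraMap K L pK⁻¹ := by
      have h1 : algebraMap K L pK * ψ v = 1 := by
        have h2 : algebraMap S[X] L pS = algebraMap K L pK := by
          rw [IsScalarTower.algebraMap_eq S[X] K L]; rfl
        rw [← h2, ← hψφ pS, ← map_mul]
        rw [show φ pS * v = 1 from hv, map_one]
      rw [map_inv₀]
      exact (inv_eq_of_mul_eq_one_right h1).symm
    set ξ : K := (algebraMap S[X] K s) ^ m * pK⁻¹ with hξ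
    have hκξ : algebraMap K L ξ = (algebraMap S[X] L s) ^ m * ψ v := by
      rw [hξ, map_mul, map_pow, hψv, IsScalarTower.algebraMap_apply S[X] K L]
    have hint : IsIntegral S[X] ξ :=
      IsIntegral.tower_bot (algebraMap K L).injective (by rwa [hκξ])
    obtain ⟨y, hy⟩ := IsIntegrallyClosed.isIntegral_iff.mp hint
    refine ⟨m, y, ?_⟩
    apply IsFractionRing.injective S[X] K
    rw [map_mul, map_pow, hy, hξ]
    rw [mul_comm (pK) _, mul_assoc, inv_mul_cancel₀ hpK0, mul_one]
  -- endgame: infinitely many coprime monic irreducibles, finitely many factors of s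
  set T := (UniqueFactorizationMonoid.normalizedFactors s).toFinset with hT
  obtain ⟨t, htsub, htcard⟩ := (aux_infinite_monic_irred k).exists_subset_card_eq (T.card + 1)
  have hstep : ∀ p ∈ t, ∃ rT ∈ T, ∃ qq : S[X], Irreducible qq ∧
      qq ∣ p.map (algebraMap k S) ∧ Associated qq rT := by
    intro p hpt
    obtain ⟨hpm, hpi⟩ := htsub hpt
    have hp0 : p ≠ 0 := hpi.ne_zero
    obtain ⟨m, hdv⟩ := hdvd p hp0
    have hpS0 : p.map (algebraMap k S) ≠ 0 := Polynomial.map_ne_zero hp0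
    have hnu : ¬ IsUnit (p.map (algebraMap k S)) := by
      apply not_isUnit_of_natDegree_pos
      rw [natDegree_map_eq_of_injective (algebraMap k S).injective]
      exact hpi.natDegree_pos
    obtain ⟨qq, hqi, hqd⟩ := WfDvdMonoid.exists_irreducible_factor hnu hpS0
    have hqs : qq ∣ s :=
      (UniqueFactorizationMonoid.irreducible_iff_prime.mp hqi).dvd_of_dvd_pow (hqd.trans hdv)
    obtain ⟨rT, hrT, hass⟩ :=
      UniqueFactorizationMonoid.exists_mem_normalizedFactors_of_dvd hs0 hqi hqs
    exact ⟨rT, Multiset.mem_toFinset.mpr hrT, qq, hqi, hqd, hass⟩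
  choose! F hFmem q hqirr hqdvd hqass using hstep
  have hcard : t.card ≤ T.card := by
    apply Finset.card_le_card_of_injOn F (fun p hp => hFmem p hp)
    intro p₁ h₁ p₂ h₂ hF
    by_contra hne
    obtain ⟨hm₁, hi₁⟩ := htsub h₁
    obtain ⟨hm₂, hi₂⟩ := htsub h₂
    have hcop : IsCoprime p₁ p₂ := by
      rw [Irreducible.coprime_iff_not_dvd hi₁]
      intro hdv
      exact hne (eq_of_monic_of_associated hm₁ hm₂ (hi₁.associated_of_dvd hi₂ hdv))
    have hcopS : IsCoprime (p₁.map (algebraMap k S)) (p₂.map (algebraMap k S)) := by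
      have := hcop.map (mapRingHom (algebraMap k S))
      simpa using this
    have hassoc : Associated (q p₁) (q p₂) :=
      (hqass p₁ h₁).trans (hF ▸ (hqass p₂ h₂).symm)
    have hdv2 : q p₁ ∣ p₂.map (algebraMap k S) := hassoc.dvd.trans (hqdvd p₂ h₂)
    exact (hqirr p₁ h₁).not_isUnit (hcopS.isUnit_of_dvd' (hqdvd p₁ h₁) hdv2)
  omega

/-- Let `k` be a field, `S` a `k`-algebra which is a field, and `R` a finitely
generated `S`-algebra. If `ℓ` is a field extension of `k` such that `S ⊗[k] ℓ` embeds into `R`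
as an `S`-algebra, then `ℓ` is algebraic over `k`. -/
theorem pv_ell_algebraic
    (k : Type*) [Field k] (S : Type*) [Field S] [Algebra k S]
    (R : Type*) [CommRing R] [Algebra S R]
    (hfg : Algebra.FiniteType S R)
    (ℓ : Type*) [Field ℓ] [Algebra k ℓ]
    (f : (S ⊗[k] ℓ) →ₐ[S] R) (hf : Function.Injective f) :
    Algebra.IsAlgebraic k ℓ := by
  constructor
  intro a
  by_contra ha
  letI : Algebra k R := ((algebraMap S R).comp (algebraMap k S)).toAlgebra
  haveI : IsScalarTower k S R := IsScalarTower.of_algebraMap_eq fun c => rfl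
  set ι : ℓ →ₐ[k] R := (f.restrictScalars k).comp Algebra.TensorProduct.includeRight with hι
  set x : R := ι a with hx
  -- units
  have hu : ∀ p : k[X], p ≠ 0 → IsUnit (Polynomial.aeval x (p.map (algebraMap k S))) := by
    intro p hp
    have hne : Polynomial.aeval a p ≠ 0 := fun h0 => ha ⟨p, hp, h0⟩
    have hkey : Polynomial.aeval x (p.map (algebraMap k S)) = ι (Polynomial.aeval a p) := by
      rw [aeval_map_algebraMap, hx, aeval_algHom_apply]
    rw [hkey]
    exact isUnit_iff_exists_inv.mpr ⟨ι (Polynomial.aeval a p)⁻¹,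
      by rw [← map_mul, mul_inv_cancel₀ hne, map_one]⟩
  -- injectivity of aeval x on S[X]
  have hja : Function.Injective (Polynomial.aeval a : k[X] →ₐ[k] ℓ) :=
    transcendental_iff_injective.mp ha
  set T : (S ⊗[k] k[X]) →ₐ[k] (S ⊗[k] ℓ) :=
    Algebra.TensorProduct.map (AlgHom.id k S) (Polynomial.aeval a) with hT
  have hTinj : Function.Injective T := by
    have hco : T.toLinearMap = LinearMap.lTensor S (Polynomial.aeval a).toLinearMap := by
      apply TensorProduct.ext'
      intro s p
      simp [hT]
    have : Function.Injective (LinearMap.lTensor S (Polynomial.aeval a).toLinearMap) :=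
      Module.Flat.lTensor_preserves_injective_linearMap _ hja
    rw [show ⇑T = ⇑T.toLinearMap from rfl, hco]
    exact this
  set e := polyEquivTensor k S with he
  have hcomm : ((Polynomial.aeval x).restrictScalars k : S[X] →ₐ[k] R)
      = ((f.restrictScalars k).comp T).comp e.toAlgHom := by
    apply Polynomial.algHom_ext'
    · apply AlgHom.ext
      intro s
      show (aeval x) (C s) = f (T (e (C s)))
      rw [aeval_C]
      have h1 : e (C s) = s ⊗ₜ[k] (1 : k[X]) := by
        rw [he]; simp only [polyEquivTensor_apply, eval₂_C]; rfl
      rw [h1, hT, Algebra.TensorProduct.map_tmul]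
      simp only [AlgHom.coe_id, id_eq, map_one]
      exact (f.commutes s).symm
    · show (aeval x) (X : S[X]) = f (T (e X))
      have h1 : e (X : S[X]) = (1 : S) ⊗ₜ[k] (X : k[X]) := by
        rw [he]; simp only [polyEquivTensor_apply, eval₂_X]
      rw [aeval_X, h1, hT, Algebra.TensorProduct.map_tmul]
      simp only [AlgHom.coe_id, id_eq, aeval_X]
      rfl
  have hinj : Function.Injective (Polynomial.aeval x : S[X] →ₐ[S] R) := by
    have h1 : ⇑(Polynomial.aeval x : S[X] →ₐ[S] R)
        = ⇑(((f.restrictScalars k).comp T).comp e.toAlgHom) := by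
      rw [← hcomm]; rfl
    rw [h1]
    simp only [AlgHom.coe_comp]
    exact hf.comp (hTinj.comp e.injective)
  exact (aux_core k S R hfg x hinj hu).elim
end

section
/- Let F: D → C and G: C → D be an adjoint pair (F left adjoint to G) between abelian categories, with unit η: id_D → G∘F and counit ε: F∘G → id_C. If η_V is an isomorphism for all V and F is exact and every subobject of F(V) is of the form F(W), then ε_M is a monomorphism for every M ∈ C, provided G is left exact. -/
open CategoryTheory CategoryTheory.Limits

universe v₁ v₂ u₁ u₂

/-- Let `F ⊣ G` be an adjunction between abelian categories with unit `η` and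
counit `ε`.  If every `η_V` is an isomorphism, `F` is exact, every subobject of `F(V)` is of
the form `F(W)`, and `G` is left exact, then `ε_M` is a monomorphism for every `M`. -/
theorem pv_counit_mono
    (D : Type u₁) [Category.{v₁} D] [Abelian D]
    (C : Type u₂) [Category.{v₂} C] [Abelian C]
    (F : D ⥤ C) (G : C ⥤ D) (adj : F ⊣ G)
    [PreservesFiniteLimits F] [PreservesFiniteColimits F]
    [PreservesFiniteLimits G]
    (hη : ∀ V : D, IsIso (adj.unit.app V))
    (hsub : ∀ (V : D) (N : Subobject (F.obj V)), ∃ W : D, Nonempty ((N : C) ≅ F.obj W)) :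
    ∀ M : C, Mono (adj.counit.app M) := by
  intro M
  set ε := adj.counit.app M with hε
  -- G(ε) is an isomorphism, since η_{G M} ≫ G(ε) = 𝟙 and η is an isomorphism
  have htri : adj.unit.app (G.obj M) ≫ G.map ε = 𝟙 _ := adj.right_triangle_components M
  have hGε : IsIso (G.map ε) := by
    haveI := hη (G.obj M)
    exact IsIso.of_isIso_fac_left htri
  -- hence the kernel of G(ε) is zero
  have hkerGε : IsZero (kernel (G.map ε)) := by
    haveI : Mono (G.map ε) := inferInstance
    rw [IsZero.iff_id_eq_zero]
    rw [← cancel_mono (kernel.ι (G.map ε))]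
    simp [kernel.ι_of_mono]
  -- G(kernel ε) ≅ kernel (G ε) is zero
  have hGker : IsZero (G.obj (kernel ε)) :=
    hkerGε.of_iso (PreservesKernel.iso G ε)
  -- kernel ε is of the form F(W)
  obtain ⟨W, ⟨e⟩⟩ := hsub (G.obj M) (Subobject.mk (kernel.ι ε))
  have eker : kernel ε ≅ F.obj W :=
    (Subobject.underlyingIso (kernel.ι ε)).symm ≪≫ e
  -- W is zero
  have hW : IsZero W := by
    haveI := hη W
    have : IsZero (G.obj (F.obj W)) := hGker.of_iso (G.mapIso eker).symm
    exact this.of_iso (asIso (adj.unit.app W))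
  -- hence F(W) is zero, so kernel ε is zero
  have hker : IsZero (kernel ε) := (F.map_isZero hW).of_iso eker
  exact Abelian.mono_of_kernel_ι_eq_zero ε (hker.eq_zero_of_src _)
end
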